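/- For every n ≥ 1, the following two polynomial identities hold: Σ_{π ∈ S_{2n}, cpk^e(π)=0} x^{cpk^o(π)} = Σ_{π ∈ S_{2n−1}, cpk^e(π)=0} x^{cpk^o(π)}, and Σ_{π ∈ S_{2n+1}, cpk^o(π)=0} x^{cpk^e(π)} = Σ_{π ∈ S_{2n}, cpk^o(π)=0} x^{cpk^e(π)}. Equivalently, with P_m(p,q) = Σ_{π ∈ S_m} p^{cpk^o(π)} q^{cpk^e(π)}, one has P_{2n}(x,0) = P_{2n−1}(x,0) and P_{2n+1}(0,x) = P_{2n}(0,x). -/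

import Mathlib

open Finset Polynomial

/-- Number of odd cycle peaks of a permutation of `[n]` (the element `i : Fin n`
represents the value `i+1 ∈ {1,…,n}`). -/
def cpko (n : ℕ) (π : Equiv.Perm (Fin n)) : ℕ :=
  (Finset.univ.filter fun i : Fin n => π.symm i < i ∧ π i < i ∧ Odd ((i : ℕ) + 1)).card

/-- Number of even cycle peaks of a permutation of `[n]`. -/
def cpke (n : ℕ) (π : Equiv.Perm (Fin n)) : ℕ :=
  (Finset.univ.filter fun i : Fin n => π.symm i < i ∧ π i < i ∧ Even ((i : ℕ) + 1)).card

namespace Stmt11Aux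

open Equiv

def cps (m : ℕ) (r : ℕ → Prop) [DecidablePred r] (π : Equiv.Perm (Fin m)) : ℕ :=
  (Finset.univ.filter fun i : Fin m => π.symm i < i ∧ π i < i ∧ r ((i : ℕ) + 1)).card

example (m : ℕ) : cpko m = cps m Odd := rfl
example (m : ℕ) : cpke m = cps m Even := rfl

variable {m : ℕ}

def F (m : ℕ) (π : Equiv.Perm (Fin m)) : Equiv.Perm (Fin (m + 1)) :=
  finSuccEquivLast.symm.permCongr π.optionCongr

def G (m : ℕ) (σ : Equiv.Perm (Fin (m + 1))) : Equiv.Perm (Fin m) :=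
  Equiv.removeNone (finSuccEquivLast.permCongr σ)

@[simp] lemma F_castSucc (π : Equiv.Perm (Fin m)) (j : Fin m) :
    F m π (Fin.castSucc j) = Fin.castSucc (π j) := by
  simp [F]

@[simp] lemma F_last (π : Equiv.Perm (Fin m)) : F m π (Fin.last m) = Fin.last m := by
  simp [F]

@[simp] lemma F_symm (π : Equiv.Perm (Fin m)) : (F m π).symm = F m π.symm := by
  apply Equiv.ext; intro x
  apply (F m π).injective
  rw [Equiv.apply_symm_apply]
  induction x using Fin.lastCases with
  | last => rw [F_last, F_last]
  | cast j => rw [F_castSucc, F_castSucc, Equiv.apply_symm_apply]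

lemma G_F (π : Equiv.Perm (Fin m)) : G m (F m π) = π := by
  have h : finSuccEquivLast.permCongr (F m π) = π.optionCongr := by
    rw [F, ← Equiv.permCongr_symm, Equiv.apply_symm_apply]
  rw [G, h, Equiv.removeNone_optionCongr]

lemma F_G (σ : Equiv.Perm (Fin (m + 1))) (h : σ (Fin.last m) = Fin.last m) :
    F m (G m σ) = σ := by
  ext x
  induction x using Fin.lastCases with
  | last => rw [F_last, h]
  | cast j =>
    have hne : σ (Fin.castSucc j) ≠ Fin.last m := fun he => by
      have := σ.injective (he.trans h.symm)
      exact absurd this (Fin.castSucc_lt_last j).ne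
    obtain ⟨k, hk⟩ : ∃ k, σ (Fin.castSucc j) = Fin.castSucc k :=
      ⟨(σ (Fin.castSucc j)).castPred hne, by simp⟩
    have hsome : some (G m σ j) = finSuccEquivLast (σ (Fin.castSucc j)) := by
      have := Equiv.removeNone_some (e := finSuccEquivLast.permCongr σ) (x := j)
        ⟨k, by simp [hk]⟩
      simpa [G] using this
    rw [hk, finSuccEquivLast_castSucc] at hsome
    rw [F_castSucc, hk, Option.some_inj.mp hsome]

lemma cps_F (r : ℕ → Prop) [DecidablePred r] (π : Equiv.Perm (Fin m)) :
    cps (m + 1) r (F m π) = cps m r π := by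
  unfold cps
  rw [← Finset.card_map (Fin.castSuccOrderEmb (n := m)).toEmbedding]
  congr 1
  ext x
  induction x using Fin.lastCases with
  | last =>
    simp only [Finset.mem_filter, Finset.mem_univ, true_and, Finset.mem_map]
    constructor
    · rintro ⟨-, h2, -⟩
      rw [F_last] at h2; exact absurd h2 (lt_irrefl _)
    · rintro ⟨a, -, ha⟩
      exact absurd ha (Fin.castSucc_lt_last a).ne
  | cast j =>
    simp only [Finset.mem_filter, Finset.mem_univ, true_and, Finset.mem_map, F_symm,
      F_castSucc, Fin.castSucc_lt_castSucc_iff, Fin.coe_castSucc]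
    constructor
    · rintro ⟨h1, h2, h3⟩
      exact ⟨j, ⟨h1, h2, h3⟩, rfl⟩
    · rintro ⟨a, ⟨h1, h2, h3⟩, ha⟩
      have : a = j := Fin.castSucc_injective m ha
      subst this
      exact ⟨h1, h2, h3⟩

lemma sigma_last (r : ℕ → Prop) [DecidablePred r] (hr : r (m + 1))
    (σ : Equiv.Perm (Fin (m + 1))) (h : cps (m + 1) r σ = 0) :
    σ (Fin.last m) = Fin.last m := by
  by_contra hne
  have h1 : σ (Fin.last m) < Fin.last m := lt_of_le_of_ne (Fin.le_last _) hne
  have hne' : σ.symm (Fin.last m) ≠ Fin.last m := fun he => hne (by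
    conv_lhs => rw [← he]
    exact σ.apply_symm_apply _)
  have h2 : σ.symm (Fin.last m) < Fin.last m := lt_of_le_of_ne (Fin.le_last _) hne'
  have hmem : Fin.last m ∈ (Finset.univ.filter fun i : Fin (m+1) =>
      σ.symm i < i ∧ σ i < i ∧ r ((i : ℕ) + 1)) := by
    simp only [Finset.mem_filter, Finset.mem_univ, true_and, Fin.val_last]
    exact ⟨h2, h1, hr⟩
  rw [cps, Finset.card_eq_zero] at h
  rw [h] at hmem
  exact absurd hmem (Finset.notMem_empty _)

lemma step (m : ℕ) (p q : ℕ → Prop) [DecidablePred p] [DecidablePred q] (hq : q (m + 1)) :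
    (∑ σ ∈ Finset.univ.filter (fun σ : Equiv.Perm (Fin (m + 1)) => cps (m + 1) q σ = 0),
      (X : Polynomial ℤ) ^ cps (m + 1) p σ)
    = ∑ π ∈ Finset.univ.filter (fun π : Equiv.Perm (Fin m) => cps m q π = 0),
      (X : Polynomial ℤ) ^ cps m p π := by
  refine Finset.sum_nbij' (G m) (F m) ?_ ?_ ?_ ?_ ?_
  · intro σ hσ
    rw [Finset.mem_filter] at hσ ⊢
    have hl := sigma_last q hq σ hσ.2
    refine ⟨Finset.mem_univ _, ?_⟩
    rw [← cps_F q, F_G σ hl]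
    exact hσ.2
  · intro π hπ
    rw [Finset.mem_filter] at hπ ⊢
    exact ⟨Finset.mem_univ _, by rw [cps_F]; exact hπ.2⟩
  · intro σ hσ
    rw [Finset.mem_filter] at hσ
    exact F_G σ (sigma_last q hq σ hσ.2)
  · intro π _
    exact G_F π
  · intro σ hσ
    rw [Finset.mem_filter] at hσ
    have hl := sigma_last q hq σ hσ.2
    conv_lhs => rw [← F_G σ hl]
    rw [cps_F]

end Stmt11Aux

/-- For every `n ≥ 1`:
`Σ_{π ∈ S_{2n}, cpk^e(π)=0} x^{cpk^o(π)} = Σ_{π ∈ S_{2n-1}, cpk^e(π)=0} x^{cpk^o(π)}` and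
`Σ_{π ∈ S_{2n+1}, cpk^o(π)=0} x^{cpk^e(π)} = Σ_{π ∈ S_{2n}, cpk^o(π)=0} x^{cpk^e(π)}`;
equivalently, `P_{2n}(x,0) = P_{2n-1}(x,0)` and `P_{2n+1}(0,x) = P_{2n}(0,x)`. -/
theorem stmt11 (n : ℕ) (hn : 1 ≤ n) :
    ((∑ π ∈ Finset.univ.filter (fun π : Equiv.Perm (Fin (2 * n)) => cpke (2 * n) π = 0),
        (X : Polynomial ℤ) ^ cpko (2 * n) π) =
      ∑ π ∈ Finset.univ.filter (fun π : Equiv.Perm (Fin (2 * n - 1)) => cpke (2 * n - 1) π = 0),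
        (X : Polynomial ℤ) ^ cpko (2 * n - 1) π) ∧
    ((∑ π ∈ Finset.univ.filter
          (fun π : Equiv.Perm (Fin (2 * n + 1)) => cpko (2 * n + 1) π = 0),
        (X : Polynomial ℤ) ^ cpke (2 * n + 1) π) =
      ∑ π ∈ Finset.univ.filter (fun π : Equiv.Perm (Fin (2 * n)) => cpko (2 * n) π = 0),
        (X : Polynomial ℤ) ^ cpke (2 * n) π) := by
  have hko : ∀ m, cpko m = Stmt11Aux.cps m Odd := fun _ => rfl
  have hke : ∀ m, cpke m = Stmt11Aux.cps m Even := fun _ => rfl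
  constructor
  · set m := 2 * n - 1 with hm
    have hmn : 2 * n = m + 1 := by omega
    rw [hmn]
    simp only [hko, hke]
    exact Stmt11Aux.step m Odd Even ⟨n, by omega⟩
  · simp only [hko, hke]
    exact Stmt11Aux.step (2 * n) Even Odd ⟨n, by ring⟩
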